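/- Let r be a positive integer and ε > 0 a real number, and set δ = ε/4. There exists a positive integer N = N(ε) such that for every simple graph G on n > N vertices with independence number α(G) ≤ δ·n and every clique D of G with |D| ≤ 2r, if every vertex v ∈ D has degree d(v) ≥ (1 - 1/r + ε/3)·n in G, then there exists a clique D* of G with |D*| = |D| + 1 and |D* ∩ D| ≥ |D| - 1. -/

import Mathlib

/-- A set of vertices is independent if no two of its vertices are adjacent. -/
def IsIndepSet {V : Type*} (G : SimpleGraph V) (s : Set V) : Prop :=
  s.Pairwise fun u v => ¬ G.Adj u v

set_option maxHeartbeats 1000000 in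
theorem clique_rotation_extension (r : ℕ) (hr : 0 < r) (ε : ℝ) (hε : 0 < ε) :
    ∃ N : ℕ, 0 < N ∧
      ∀ n : ℕ, n > N → ∀ G : SimpleGraph (Fin n),
        (∀ s : Set (Fin n), IsIndepSet G s → (s.ncard : ℝ) ≤ (ε / 4) * n) →
        ∀ D : Finset (Fin n), G.IsClique (D : Set (Fin n)) → D.card ≤ 2 * r →
        (∀ v ∈ D, (1 - 1 / (r : ℝ) + ε / 3) * n ≤ ((G.neighborSet v).ncard : ℝ)) →
        ∃ Dstar : Finset (Fin n), G.IsClique (Dstar : Set (Fin n)) ∧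
          Dstar.card = D.card + 1 ∧ D.card - 1 ≤ (Dstar ∩ D).card := by
  classical
  refine ⟨⌈24 / ε⌉₊ + 1, Nat.succ_pos _, ?_⟩
  intro n hn G hα D hDclique hDcard hdeg
  have hn24 : (24 : ℝ) / ε < n := by
    have h1 : (24 : ℝ) / ε ≤ ⌈24 / ε⌉₊ := Nat.le_ceil _
    have h2 : ((⌈24 / ε⌉₊ + 1 : ℕ) : ℝ) < n := by exact_mod_cast hn
    push_cast at h2; linarith
  have hnpos : 0 < n := lt_trans (Nat.succ_pos _) hn
  have hnR : (0 : ℝ) < n := by exact_mod_cast hnpos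
  -- trivial case: D empty
  rcases Nat.eq_zero_or_pos D.card with hk0 | hk1
  · have hD : D = ∅ := Finset.card_eq_zero.mp hk0
    refine ⟨{⟨0, hnpos⟩}, ?_, ?_, ?_⟩
    · simp [SimpleGraph.isClique_singleton]
    · simp [hD]
    · simp [hD]
  set k := D.card with hk
  have hkR1 : (1 : ℝ) ≤ k := by exact_mod_cast hk1
  have hkR2r : (k : ℝ) ≤ 2 * r := by exact_mod_cast hDcard
  have hrR : (0 : ℝ) < r := by exact_mod_cast hr
  -- degree in Finset terms
  set deg : Fin n → ℕ := fun v => (Finset.univ.filter (fun x => G.Adj v x)).card with hdegdef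
  have hdeg' : ∀ v ∈ D, (1 - 1 / (r : ℝ) + ε / 3) * n ≤ (deg v : ℝ) := by
    intro v hv
    have h := hdeg v hv
    have heq : G.neighborSet v = ↑(Finset.univ.filter (fun x => G.Adj v x)) := by
      ext x; simp
    rwa [heq, Set.ncard_coe_finset] at h
  -- miss count
  set miss : Fin n → ℕ := fun x => (D.filter (fun v => ¬ G.Adj v x)).card with hmiss
  -- the total number of misses, counted from D's side
  have hMeq : ∑ x ∈ Dᶜ, miss x = ∑ v ∈ D, (Dᶜ.filter (fun x => ¬ G.Adj v x)).card := by
    simp only [hmiss, Finset.card_filter]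
    exact Finset.sum_comm
  -- each vertex of D misses few vertices
  have hmissbound : ∀ v ∈ D, ((Dᶜ.filter (fun x => ¬ G.Adj v x)).card : ℝ)
      ≤ (1 / (r : ℝ) - ε / 3) * n := by
    intro v hv
    have hsub : Dᶜ.filter (fun x => ¬ G.Adj v x) ⊆ Finset.univ.filter (fun x => ¬ G.Adj v x) :=
      Finset.filter_subset_filter _ (Finset.subset_univ _)
    have hcard := Finset.card_le_card hsub
    have hfilter : deg v + (Finset.univ.filter (fun x => ¬ G.Adj v x)).card = n := by
      rw [hdegdef, Finset.card_filter_add_card_filter_not]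
      simp
    have hR : ((Dᶜ.filter (fun x => ¬ G.Adj v x)).card : ℝ)
        ≤ ((Finset.univ.filter (fun x => ¬ G.Adj v x)).card : ℝ) := by exact_mod_cast hcard
    have hfR : (deg v : ℝ) + ((Finset.univ.filter (fun x => ¬ G.Adj v x)).card : ℝ) = n := by
      exact_mod_cast hfilter
    have hdv := hdeg' v hv
    nlinarith [hR, hfR, hdv]
  have hMle : ((∑ x ∈ Dᶜ, miss x : ℕ) : ℝ) ≤ (k : ℝ) * ((1 / (r : ℝ) - ε / 3) * n) := by
    rw [hMeq]
    push_cast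
    calc (∑ v ∈ D, ((Dᶜ.filter (fun x => ¬ G.Adj v x)).card : ℝ))
        ≤ ∑ v ∈ D, (1 / (r : ℝ) - ε / 3) * n := Finset.sum_le_sum hmissbound
      _ = (k : ℝ) * ((1 / (r : ℝ) - ε / 3) * n) := by
          rw [Finset.sum_const, nsmul_eq_mul]
  -- case: some vertex adjacent to all of D
  by_cases hA : ∃ x ∈ Dᶜ, ∀ v ∈ D, G.Adj v x
  · obtain ⟨x, hxc, hxadj⟩ := hA
    have hxD : x ∉ D := by simpa using hxc
    refine ⟨insert x D, ?_, ?_, ?_⟩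
    · rw [Finset.coe_insert]
      exact hDclique.insert (fun b hb _ => (hxadj b hb).symm)
    · rw [Finset.card_insert_of_notMem hxD]
    · have h' : (insert x D) ∩ D = D := Finset.inter_eq_right.mpr (Finset.subset_insert x D)
      rw [h']
      omega
  -- otherwise everyone outside D misses at least one vertex
  push_neg at hA
  have hmiss1 : ∀ x ∈ Dᶜ, 1 ≤ miss x := by
    intro x hx
    obtain ⟨v, hv, hnadj⟩ := hA x hx
    have : v ∈ D.filter (fun v => ¬ G.Adj v x) := Finset.mem_filter.mpr ⟨hv, hnadj⟩
    exact Finset.card_pos.mpr ⟨v, this⟩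
  set B1 := Dᶜ.filter (fun x => miss x = 1) with hB1
  set B2 := Dᶜ.filter (fun x => ¬ (miss x = 1)) with hB2
  have hB12 : B1.card + B2.card = n - k := by
    rw [hB1, hB2, Finset.card_filter_add_card_filter_not, Finset.card_compl]
    simp [hk]
  have hkn : k ≤ n := by
    calc k ≤ Fintype.card (Fin n) := Finset.card_le_univ D
      _ = n := by simp
  have hsumB : B1.card + 2 * B2.card ≤ ∑ x ∈ Dᶜ, miss x := by
    have hsplit : ∑ x ∈ Dᶜ, miss x
        = ∑ x ∈ B1, miss x + ∑ x ∈ B2, miss x := (Finset.sum_filter_add_sum_filter_not _ _ _).symm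
    have h1 : ∑ x ∈ B1, miss x = B1.card := by
      rw [Finset.sum_congr rfl (fun x hx => (Finset.mem_filter.mp hx).2)]
      simp
      rfl
    have h2 : 2 * B2.card ≤ ∑ x ∈ B2, miss x := by
      have hge : ∀ x ∈ B2, 2 ≤ miss x := by
        intro x hx
        have h := Finset.mem_filter.mp hx
        have := hmiss1 x h.1
        omega
      calc 2 * B2.card = ∑ _x ∈ B2, 2 := by rw [Finset.sum_const, smul_eq_mul, mul_comm]
        _ ≤ ∑ x ∈ B2, miss x := Finset.sum_le_sum hge
    omega
  -- pigeonhole over D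
  set U : Fin n → Finset (Fin n) := fun u => B1.filter (fun x => ¬ G.Adj u x) with hU
  have hUsum : ∑ u ∈ D, (U u).card = B1.card := by
    have h' : ∑ u ∈ D, (U u).card = ∑ x ∈ B1, miss x := by
      simp only [hU, hmiss, Finset.card_filter]
      exact Finset.sum_comm
    rw [h', Finset.sum_congr rfl (fun x hx => (Finset.mem_filter.mp hx).2)]
    simp
    rfl
  obtain ⟨u, hu, huB⟩ : ∃ u ∈ D, B1.card ≤ k * (U u).card := by
    apply Finset.exists_le_of_sum_le (Finset.card_pos.mp hk1)
    rw [Finset.sum_const, ← Finset.mul_sum, hUsum, smul_eq_mul, ← hk, mul_comm]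
  -- real arithmetic : U u is big
  have hbig : (ε / 4) * n < ((U u).card : ℝ) := by
    have ha : ((B1.card : ℕ) : ℝ) ≤ (k : ℝ) * ((U u).card : ℝ) := by exact_mod_cast huB
    have hb12 : ((B1.card : ℕ) : ℝ) + ((B2.card : ℕ) : ℝ) = (n : ℝ) - (k : ℝ) := by
      have h' : ((B1.card + B2.card : ℕ) : ℝ) = ((n - k : ℕ) : ℝ) := by exact_mod_cast hB12
      push_cast [hkn] at h'
      linarith
    have hsB : ((B1.card : ℕ) : ℝ) + 2 * ((B2.card : ℕ) : ℝ)
        ≤ ((∑ x ∈ Dᶜ, miss x : ℕ) : ℝ) := by exact_mod_cast hsumB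
    have hdivr : (k : ℝ) * (n : ℝ) / r ≤ 2 * n := by
      rw [div_le_iff₀ hrR]
      nlinarith
    have hεn : 2 < ε * n / 12 := by
      rw [lt_div_iff₀ (by norm_num : (0:ℝ) < 12)]
      have := (div_lt_iff₀ hε).mp hn24
      nlinarith
    have hkpos : (0 : ℝ) < k := by linarith
    have hp : (k : ℝ) * 2 < (k : ℝ) * (ε * n / 12) := by
      exact mul_lt_mul_of_pos_left hεn hkpos
    have hM' : ((∑ x ∈ Dᶜ, miss x : ℕ) : ℝ)
        ≤ (k : ℝ) * (n : ℝ) / r - (k : ℝ) * (ε / 3) * n := by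
      calc ((∑ x ∈ Dᶜ, miss x : ℕ) : ℝ) ≤ (k : ℝ) * ((1 / (r : ℝ) - ε / 3) * n) := hMle
        _ = (k : ℝ) * (n : ℝ) / r - (k : ℝ) * (ε / 3) * n := by ring
    have key : (k : ℝ) * ((ε / 4) * n) < (k : ℝ) * ((U u).card : ℝ) := by
      nlinarith [ha, hb12, hsB, hdivr, hp, hM']
    exact lt_of_mul_lt_mul_left key (le_of_lt hkpos)
  -- U u is not independent, extract an edge
  have hnotind : ¬ IsIndepSet G (↑(U u) : Set (Fin n)) := by
    intro hind
    have := hα _ hind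
    rw [Set.ncard_coe_finset] at this
    linarith
  rw [IsIndepSet, Set.Pairwise] at hnotind
  push_neg at hnotind
  obtain ⟨x, hx, y, hy, hxy, hadj⟩ := hnotind
  rw [Finset.mem_coe] at hx hy
  -- hadj already positive after push_neg
  -- properties of members of U u
  have hkey : ∀ z ∈ U u, z ∉ D ∧ ¬ G.Adj u z ∧ ∀ v ∈ D, v ≠ u → G.Adj v z := by
    intro z hz
    have hz' := Finset.mem_filter.mp hz
    have hzB1 := Finset.mem_filter.mp hz'.1
    have hzD : z ∉ D := by simpa using hzB1.1
    have hm1 : miss z = 1 := hzB1.2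
    refine ⟨hzD, hz'.2, ?_⟩
    intro v hv hvu
    by_contra hnadj
    have hsub : ({v, u} : Finset (Fin n)) ⊆ D.filter (fun w => ¬ G.Adj w z) := by
      intro w hw
      rcases Finset.mem_insert.mp hw with h | h
      · subst h; exact Finset.mem_filter.mpr ⟨hv, hnadj⟩
      · rw [Finset.mem_singleton] at h; subst h; exact Finset.mem_filter.mpr ⟨hu, hz'.2⟩
    have hc2 : ({v, u} : Finset (Fin n)).card = 2 := Finset.card_pair hvu
    have hle := Finset.card_le_card hsub
    rw [hc2] at hle
    have hm1' : (D.filter (fun w => ¬ G.Adj w z)).card = 1 := hm1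
    omega
  obtain ⟨hxD, hxu, hxadj⟩ := hkey x hx
  obtain ⟨hyD, hyu, hyadj⟩ := hkey y hy
  -- build the new clique
  refine ⟨insert x (insert y (D.erase u)), ?_, ?_, ?_⟩
  · have hbase : G.IsClique (↑(D.erase u) : Set (Fin n)) :=
      hDclique.subset (Finset.coe_subset.mpr (Finset.erase_subset u D))
    have hstep1 : G.IsClique (↑(insert y (D.erase u)) : Set (Fin n)) := by
      rw [Finset.coe_insert]
      refine hbase.insert ?_
      intro b hb _
      rw [Finset.mem_coe, Finset.mem_erase] at hb
      exact (hyadj b hb.2 hb.1).symm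
    rw [Finset.coe_insert]
    refine hstep1.insert ?_
    intro b hb _
    rw [Finset.mem_coe, Finset.mem_insert] at hb
    rcases hb with h | h
    · subst h; exact hadj
    · rw [Finset.mem_erase] at h
      exact (hxadj b h.2 h.1).symm
  · have hyni : y ∉ D.erase u := fun h => hyD (Finset.mem_of_mem_erase h)
    have hxni : x ∉ insert y (D.erase u) := by
      rw [Finset.mem_insert]
      rintro (h | h)
      · exact hxy h
      · exact hxD (Finset.mem_of_mem_erase h)
    rw [Finset.card_insert_of_notMem hxni, Finset.card_insert_of_notMem hyni,
      Finset.card_erase_of_mem hu]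
    omega
  · have hsub : D.erase u ⊆ (insert x (insert y (D.erase u))) ∩ D := by
      apply Finset.subset_inter
      · exact (Finset.subset_insert _ _).trans (Finset.subset_insert _ _)
      · exact Finset.erase_subset u D
    have hle := Finset.card_le_card hsub
    rw [Finset.card_erase_of_mem hu] at hle
    omega
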